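/- Let v = Σ_{g∈G} g ∈ ℝ[G] and let w ∈ ℝ[G] be such that {v, w} is linearly independent. For each g ∈ G let L_g ⊆ ℝ[G] be the linear span of v and g•w, and set Y = ℝ[G] \ ⋃_{g∈G} L_g. Let π : ℝ[G] → ℝ[G]/ℝv be the linear quotient map (a continuous map of finite-dimensional real topological vector spaces). Then π(Y) = (ℝ[G]/ℝv) \ ⋃_{g∈G} ℝ·π(g•w), and the restriction of π to Y is a homotopy equivalence from Y onto (ℝ[G]/ℝv) \ ⋃_{g∈G} ℝ·π(g•w). -/

import Mathlib

open scoped BigOperators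

/-- The group `G = (ℤ/pℤ)^k`, written multiplicatively. -/
abbrev Gpk (p k : ℕ) : Type := Multiplicative (Fin k → ZMod p)

/-- The real group algebra `ℝ[G]`. -/
abbrev RG (p k : ℕ) : Type := MonoidAlgebra ℝ (Gpk p k)

/-- The standard topology on `ℝ[G]` (finite dimensional, induced from `G → ℝ`). -/
noncomputable instance RG.topologicalSpace (p k : ℕ) [NeZero p] :
    TopologicalSpace (RG p k) :=
  TopologicalSpace.induced (MonoidAlgebra.coeffEquiv.trans Finsupp.equivFunOnFinite : RG p k ≃ (Gpk p k → ℝ))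
    inferInstance

/-- The left action of `g ∈ G` on `ℝ[G]` by left multiplication. -/
noncomputable def act (p k : ℕ) (g : Gpk p k) (x : RG p k) : RG p k :=
  MonoidAlgebra.of ℝ (Gpk p k) g * x


/-- The vector `v = Σ_{g ∈ G} g ∈ ℝ[G]`. -/
noncomputable def gSum (p k : ℕ) [NeZero p] : RG p k :=
  ∑ g : Gpk p k, MonoidAlgebra.of ℝ (Gpk p k) g

section Aux
variable (p k : ℕ) [NeZero p]

noncomputable def rgEquiv : RG p k ≃ₗ[ℝ] (Gpk p k → ℝ) :=
  (MonoidAlgebra.coeffLinearEquiv ℝ).trans (Finsupp.linearEquivFunOnFinite ℝ ℝ (Gpk p k))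

lemma rgInducing : Topology.IsInducing (rgEquiv p k) := ⟨rfl⟩

noncomputable instance : IsTopologicalAddGroup (RG p k) :=
  (rgInducing p k).topologicalAddGroup (rgEquiv p k).toLinearMap.toAddMonoidHom

instance : ContinuousSMul ℝ (RG p k) :=
  (rgInducing p k).continuousSMul continuous_id fun {c x} => map_smul (rgEquiv p k) c x

instance : T2Space (RG p k) :=
  Topology.IsEmbedding.t2Space ⟨rgInducing p k, (rgEquiv p k).injective⟩

instance : FiniteDimensional ℝ (RG p k) := Module.Finite.equiv (rgEquiv p k).symm

lemma span_pair_eq (v u : RG p k) :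
    Submodule.span ℝ {v, u} =
      Submodule.comap (Submodule.span ℝ {v}).mkQ
        (Submodule.span ℝ {(Submodule.span ℝ {v}).mkQ u}) := by
  have h : Submodule.span ℝ {(Submodule.span ℝ {v}).mkQ u}
      = Submodule.map (Submodule.span ℝ {v}).mkQ (Submodule.span ℝ {u}) := by
    rw [Submodule.map_span, Set.image_singleton]
  rw [h, Submodule.comap_map_eq, Submodule.ker_mkQ, Submodule.span_insert, sup_comm]

end Aux

/-- **The projection away from `v` is a homotopy equivalence of the complements.**
Let `v = Σ_{g∈G} g`, let `w ∈ ℝ[G]` with `{v, w}` linearly independent, let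
`L_g = span(v, g•w)` and `Y = ℝ[G] \ ⋃_g L_g`. Let `π : ℝ[G] → ℝ[G]/ℝv` be the
quotient map. Then `π(Y) = (ℝ[G]/ℝv) \ ⋃_g ℝ·π(g•w)` and the restriction of `π` to
`Y` is a homotopy equivalence onto this set. -/
theorem projection_homotopy_equiv (p k : ℕ) [Fact p.Prime] (hk : 1 ≤ k)
    (w : RG p k) (hw : LinearIndependent ℝ ![gSum p k, w]) :
    (Submodule.span ℝ {gSum p k}).mkQ ''
        (⋃ g : Gpk p k,
          (Submodule.span ℝ {gSum p k, act p k g w} : Set (RG p k)))ᶜ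
      = (⋃ g : Gpk p k,
          (Submodule.span ℝ {(Submodule.span ℝ {gSum p k}).mkQ (act p k g w)} :
            Set (RG p k ⧸ Submodule.span ℝ {gSum p k})))ᶜ ∧
    ∃ e : ContinuousMap.HomotopyEquiv
        (↥(⋃ g : Gpk p k,
            (Submodule.span ℝ {gSum p k, act p k g w} : Set (RG p k)))ᶜ)
        (↥(⋃ g : Gpk p k,
            (Submodule.span ℝ {(Submodule.span ℝ {gSum p k}).mkQ (act p k g w)} :
              Set (RG p k ⧸ Submodule.span ℝ {gSum p k})))ᶜ),
      ∀ y, (e.toFun y : RG p k ⧸ Submodule.span ℝ {gSum p k})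
        = (Submodule.span ℝ {gSum p k}).mkQ (y : RG p k) := by
  haveI : NeZero p := ⟨(Fact.out : p.Prime).ne_zero⟩
  set V : Submodule ℝ (RG p k) := Submodule.span ℝ {gSum p k} with hV
  set π := V.mkQ with hπ
  set U : Set (RG p k ⧸ V) :=
    ⋃ g : Gpk p k, (Submodule.span ℝ {π (act p k g w)} : Set (RG p k ⧸ V)) with hU
  -- the big union is the preimage of U
  have key : (⋃ g : Gpk p k,
      (Submodule.span ℝ {gSum p k, act p k g w} : Set (RG p k))) = π ⁻¹' U := by
    rw [hU, Set.preimage_iUnion]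
    refine Set.iUnion_congr fun g => ?_
    rw [span_pair_eq p k (gSum p k) (act p k g w)]
    rfl
  have hsurj : Function.Surjective π := Submodule.mkQ_surjective V
  constructor
  · rw [key, ← Set.preimage_compl, Set.image_preimage_eq _ hsurj]
  -- instances on the quotient
  haveI : IsClosed (V : Set (RG p k)) := Submodule.closed_of_finiteDimensional V
  -- continuous linear section
  obtain ⟨σ, hσ⟩ := π.exists_rightInverse_of_surjective
    (LinearMap.range_eq_top.2 hsurj)
  have hσ' : ∀ z, π (σ z) = z := fun z => DFunLike.congr_fun hσ z
  have hσcont : Continuous σ := LinearMap.continuous_of_finiteDimensional σ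
  have hπcont : Continuous π := continuous_quot_mk
  -- membership transfers
  have memY : ∀ x : RG p k,
      (x ∈ (⋃ g : Gpk p k,
        (Submodule.span ℝ {gSum p k, act p k g w} : Set (RG p k)))ᶜ) ↔ π x ∈ Uᶜ := by
    intro x; rw [key]; rfl
  -- the forward continuous map
  refine ⟨⟨ContinuousMap.mk (fun y => ⟨π y, (memY y).1 y.2⟩)
            (Continuous.subtype_mk (hπcont.comp continuous_subtype_val) _),
          ContinuousMap.mk (fun z => ⟨σ z, (memY _).2 (by rw [hσ']; exact z.2)⟩)
            (Continuous.subtype_mk (hσcont.comp continuous_subtype_val) _),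
          ?_, ?_⟩, fun y => rfl⟩
  · -- left_inv : σ ∘ π homotopic to id on Y
    have hmem : ∀ (t : ℝ) (y : RG p k), y ∈ (⋃ g : Gpk p k,
        (Submodule.span ℝ {gSum p k, act p k g w} : Set (RG p k)))ᶜ →
        ((1 - t) • σ (π y) + t • y) ∈ (⋃ g : Gpk p k,
        (Submodule.span ℝ {gSum p k, act p k g w} : Set (RG p k)))ᶜ := by
      intro t y hy
      refine (memY _).2 ?_
      have h2 : π ((1 - t) • σ (π y) + t • y) = π y := by
        rw [map_add, map_smul, map_smul, hσ', ← add_smul, sub_add_cancel, one_smul]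
      rw [h2]
      exact (memY _).1 hy
    have hcont : Continuous (fun q : (unitInterval ×
          ↥(⋃ g : Gpk p k,
            (Submodule.span ℝ {gSum p k, act p k g w} : Set (RG p k)))ᶜ) =>
          ((1 - (q.1 : ℝ)) • σ (π (q.2 : RG p k)) + (q.1 : ℝ) • (q.2 : RG p k))) := by
      have hc1 : Continuous fun q : (unitInterval ×
          ↥(⋃ g : Gpk p k,
            (Submodule.span ℝ {gSum p k, act p k g w} : Set (RG p k)))ᶜ) =>
          ((q.1 : ℝ)) := continuous_subtype_val.comp continuous_fst
      have hc2 : Continuous fun q : (unitInterval ×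
          ↥(⋃ g : Gpk p k,
            (Submodule.span ℝ {gSum p k, act p k g w} : Set (RG p k)))ᶜ) =>
          ((q.2 : RG p k)) := continuous_subtype_val.comp continuous_snd
      exact ((continuous_const.sub hc1).smul ((hσcont.comp hπcont).comp hc2)).add
        (hc1.smul hc2)
    refine ⟨⟨⟨fun q =>
        ⟨(1 - (q.1 : ℝ)) • σ (π (q.2 : RG p k)) + (q.1 : ℝ) • (q.2 : RG p k),
          hmem _ _ q.2.2⟩,
        hcont.subtype_mk _⟩, ?_, ?_⟩⟩
    · intro y
      apply Subtype.ext
      simp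
    · intro y
      apply Subtype.ext
      simp
  · -- right_inv : π ∘ σ = id on Z
    refine ⟨?_⟩
    convert ContinuousMap.Homotopy.refl _ using 2
    ext z
    exact (hσ' z).symm
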